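/- For the m-qudit ensemble E = {(η_i, ρ_i)}_{i=1}^{d+2} with η_i = 1/(d^m+d), ρ_i = |i−1⋯i−1⟩⟨i−1⋯i−1| for i = 1,…,d; η_{d+1} = (d^m−d)/(d^m+d), ρ_{d+1} = (1 − Σ_{j<d} |j⋯j⟩⟨j⋯j|)/(d^m−d); η_{d+2} = d/(d^m+d), ρ_{d+2} = Φ_d^m, the LOCC measurement M_i = |i−1⋯i−1⟩⟨i−1⋯i−1| (i ≤ d), M_{d+1} = 1 − Σ_{j<d}|j⋯j⟩⟨j⋯j|, M_{d+2} = 0 achieves success probability d^m/(d^m+d), and we have max_i η_i = (d^m−d)/(d^m+d) < d^m/(d^m+d); moreover with R_i = (d^m+d)η_iρ_i one has Tr[M_i(1 − R_i)] = 0 for all i = 1,…,d+2. -/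

import Mathlib

open Matrix BigOperators ComplexOrder

noncomputable section

/-- Tensor product of a family of local operators, one per party/step. -/
def tensorFam {m : ℕ} {ι : Fin m → Type*} [∀ k, Fintype (ι k)]
    (A : (k : Fin m) → Matrix (ι k) (ι k) ℂ) :
    Matrix ((k : Fin m) → ι k) ((k : Fin m) → ι k) ℂ :=
  Matrix.of fun i j => ∏ k, A k (i k) (j k)

/-- Separable operator: a sum of tensor products of positive semidefinite local operators. -/
def IsSep {m : ℕ} {ι : Fin m → Type*} [∀ k, Fintype (ι k)]
    (E : Matrix ((k : Fin m) → ι k) ((k : Fin m) → ι k) ℂ) : Prop :=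
  ∃ (S : Finset ℕ) (A : ℕ → (k : Fin m) → Matrix (ι k) (ι k) ℂ),
    (∀ s ∈ S, ∀ k, (A s k).PosSemidef) ∧ E = ∑ s ∈ S, tensorFam (A s)

/-- Separable state: separable with trace one. -/
def IsSepState {m : ℕ} {ι : Fin m → Type*} [∀ k, Fintype (ι k)]
    (σ : Matrix ((k : Fin m) → ι k) ((k : Fin m) → ι k) ℂ) : Prop :=
  IsSep σ ∧ σ.trace = 1

/-- Block positive: nonnegative mean value on every separable state. -/
def IsBlockPos {m : ℕ} {ι : Fin m → Type*} [∀ k, Fintype (ι k)]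
    (E : Matrix ((k : Fin m) → ι k) ((k : Fin m) → ι k) ℂ) : Prop :=
  ∀ σ, IsSepState σ → 0 ≤ ((E * σ).trace).re

def IsPOVM {α N : Type*} [Fintype α] [Fintype N] [DecidableEq N]
    (M : α → Matrix N N ℂ) : Prop :=
  (∀ i, (M i).PosSemidef) ∧ ∑ i, M i = 1

/-- Average success probability of a guessing strategy. -/
def succProb {α N : Type*} [Fintype α] [Fintype N]
    (η : α → ℝ) (ρ M : α → Matrix N N ℂ) : ℝ :=
  ∑ i, η i * ((ρ i * M i).trace).re
/-- The m-qudit GHZ state Φ_d^m = (1/d) Σ_{a,b} |a⋯a⟩⟨b⋯b|. -/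
def ghz (m d : ℕ) : Matrix ((_ : Fin m) → Fin d) ((_ : Fin m) → Fin d) ℂ :=
  Matrix.of fun i j =>
    if (∀ k k', i k = i k') ∧ (∀ k k', j k = j k') then (d : ℂ)⁻¹ else 0

/-- The m-qudit projector Ψ_j^m = |j⋯j⟩⟨j⋯j| onto the j-th diagonal product basis
vector (with j given as a natural number). -/
def diagProj (m d : ℕ) (j : ℕ) : Matrix ((_ : Fin m) → Fin d) ((_ : Fin m) → Fin d) ℂ :=
  Matrix.of fun a b =>
    if (∀ k, ((a k : ℕ) = j)) ∧ (∀ k, ((b k : ℕ) = j)) then 1 else 0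

/-! ### Auxiliary lemmas -/

lemma outer_psd {n : Type*} [Fintype n] (v : n → ℂ) :
    (Matrix.of fun a b => (starRingEnd ℂ) (v a) * v b).PosSemidef := by
  refine Matrix.PosSemidef.of_dotProduct_mulVec_nonneg ?_ ?_
  · ext a b
    simp [Matrix.conjTranspose_apply, mul_comm]
  · intro x
    have h : star x ⬝ᵥ ((Matrix.of fun a b => (starRingEnd ℂ) (v a) * v b) *ᵥ x)
        = star (∑ b, v b * x b) * (∑ b, v b * x b) := by
      simp only [dotProduct, Matrix.mulVec, Matrix.of_apply, Pi.star_apply,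
        star_sum, star_mul', Finset.sum_mul, Finset.mul_sum]
      rw [Finset.sum_comm]
      refine Finset.sum_congr rfl fun a _ => Finset.sum_congr rfl fun b _ => ?_
      simp only [Complex.star_def]; ring
    rw [h]
    exact star_mul_self_nonneg _

lemma idem_psd {n : Type*} [Fintype n] {Q : Matrix n n ℂ} (h1 : Q.IsHermitian)
    (h2 : Q * Q = Q) : Q.PosSemidef := by
  refine Matrix.PosSemidef.of_dotProduct_mulVec_nonneg h1 fun x => ?_
  have : star x ⬝ᵥ (Q *ᵥ x) = star (Q *ᵥ x) ⬝ᵥ (Q *ᵥ x) := by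
    conv_lhs => rw [← h2, ← Matrix.mulVec_mulVec, Matrix.dotProduct_mulVec]
    congr 1
    rw [Matrix.star_mulVec, h1.eq]
  rw [this]
  exact dotProduct_star_self_nonneg _

lemma psd_smul_real {n : Type*} [Fintype n] {A : Matrix n n ℂ} (hA : A.PosSemidef)
    {r : ℝ} (hr : 0 ≤ r) : ((r : ℂ) • A).PosSemidef := by
  refine Matrix.PosSemidef.of_dotProduct_mulVec_nonneg ?_ ?_
  · rw [Matrix.IsHermitian, Matrix.conjTranspose_smul, hA.1.eq, Complex.star_def,
      Complex.conj_ofReal]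
  · intro x
    rw [Matrix.smul_mulVec, dotProduct_smul, smul_eq_mul]
    exact mul_nonneg (by exact_mod_cast hr) (hA.dotProduct_mulVec_nonneg x)

lemma rsmul_eq {n : Type*} (r : ℝ) (A : Matrix n n ℂ) : r • A = (r : ℂ) • A := by
  ext a b
  simp [Matrix.smul_apply, Complex.real_smul]

def cv (m : ℕ) {d : ℕ} (j : Fin d) : (_ : Fin m) → Fin d := fun _ => j

lemma cv_inj {m d : ℕ} (hm : 0 < m) {j j' : Fin d} (h : cv m j = cv m j') : j = j' :=
  congrFun h ⟨0, hm⟩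

lemma diagProj_eq {m d : ℕ} (j : Fin d) :
    diagProj m d (j : ℕ) = Matrix.single (cv m j) (cv m j) (1 : ℂ) := by
  have key : ∀ x : (_ : Fin m) → Fin d, (∀ k, ((x k : ℕ) = (j : ℕ))) ↔ cv m j = x := by
    intro x
    constructor
    · intro h; funext k; exact (Fin.ext (h k)).symm
    · intro h k; rw [← h]; rfl
  ext a b
  simp only [diagProj, Matrix.single, Matrix.of_apply]
  exact if_congr (and_congr (key a) (key b)) rfl rfl

lemma diagProj_mul_self {m d : ℕ} (j : Fin d) :
    diagProj m d (j : ℕ) * diagProj m d (j : ℕ) = diagProj m d (j : ℕ) := by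
  rw [diagProj_eq, Matrix.single_mul_single_same, one_mul]

lemma diagProj_mul_ne {m d : ℕ} (hm : 0 < m) {j j' : Fin d} (h : j ≠ j') :
    diagProj m d (j : ℕ) * diagProj m d (j' : ℕ) = 0 := by
  rw [diagProj_eq, diagProj_eq]
  exact Matrix.single_mul_single_of_ne (h := fun hc => h (cv_inj hm hc)) ..

lemma diagProj_trace {m d : ℕ} (j : Fin d) : (diagProj m d (j : ℕ)).trace = 1 := by
  rw [diagProj_eq]; exact Matrix.trace_single_eq_same ..

lemma diagProj_psd {m d : ℕ} (j : Fin d) : (diagProj m d (j : ℕ)).PosSemidef := by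
  have : diagProj m d (j : ℕ) =
      Matrix.of fun a b => (starRingEnd ℂ)
        ((fun x => if cv m j = x then (1 : ℂ) else 0) a) *
        ((fun x => if cv m j = x then (1 : ℂ) else 0) b) := by
    rw [diagProj_eq]
    ext a b
    by_cases h1 : cv m j = a <;> by_cases h2 : cv m j = b <;>
      simp [Matrix.single, h1, h2]
  rw [this]
  exact outer_psd _

lemma ghz_eq {m d : ℕ} (hd : 0 < d) :
    ghz m d = Matrix.of fun a b => (starRingEnd ℂ)
      ((fun x => if ∀ k k' : Fin m, x k = x k' then ((Real.sqrt d : ℝ) : ℂ)⁻¹ else 0) a) *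
      ((fun x => if ∀ k k' : Fin m, x k = x k' then ((Real.sqrt d : ℝ) : ℂ)⁻¹ else 0) b) := by
  have hs : ((Real.sqrt d : ℝ) : ℂ)⁻¹ * ((Real.sqrt d : ℝ) : ℂ)⁻¹ = (d : ℂ)⁻¹ := by
    rw [← mul_inv, ← Complex.ofReal_mul, Real.mul_self_sqrt (by positivity)]
    push_cast
    ring
  have hconj : (starRingEnd ℂ) (((Real.sqrt d : ℝ) : ℂ))⁻¹ = (((Real.sqrt d : ℝ) : ℂ))⁻¹ := by
    rw [map_inv₀, Complex.conj_ofReal]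
  ext a b
  simp only [ghz, Matrix.of_apply]
  by_cases h1 : ∀ k k' : Fin m, a k = a k' <;> by_cases h2 : ∀ k k' : Fin m, b k = b k'
  · rw [if_pos ⟨h1, h2⟩, if_pos h1, if_pos h2, hconj, hs]
  · rw [if_neg (fun hc => h2 hc.2), if_pos h1, if_neg h2, mul_zero]
  · rw [if_neg (fun hc => h1 hc.1), if_neg h1, map_zero, zero_mul]
  · rw [if_neg (fun hc => h1 hc.1), if_neg h1, map_zero, zero_mul]

lemma ghz_psd {m d : ℕ} (hd : 0 < d) : (ghz m d).PosSemidef := by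
  rw [ghz_eq hd]; exact outer_psd _

lemma ghz_trace {m d : ℕ} (hm : 0 < m) (hd : 0 < d) : (ghz m d).trace = 1 := by
  have hpt : ∀ a : (_ : Fin m) → Fin d,
      (if ∀ k k' : Fin m, a k = a k' then (d : ℂ)⁻¹ else 0)
        = ∑ j : Fin d, if a = cv m j then (d : ℂ)⁻¹ else 0 := by
    intro a
    by_cases hc : ∀ k k' : Fin m, a k = a k'
    · have ha : a = cv m (a ⟨0, hm⟩) := funext fun k => hc k ⟨0, hm⟩
      rw [if_pos hc, Finset.sum_eq_single (a ⟨0, hm⟩)]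
      · rw [if_pos ha]
      · intro j _ hj
        rw [if_neg]
        intro h
        exact hj (cv_inj hm (ha ▸ h : cv m (a ⟨0, hm⟩) = cv m j)).symm
      · intro h; exact absurd (Finset.mem_univ _) h
    · rw [if_neg hc]
      refine (Finset.sum_eq_zero fun j _ => ?_).symm
      rw [if_neg]
      intro h
      exact hc fun k k' => by rw [h]; rfl
  have : (ghz m d).trace = ∑ a : (_ : Fin m) → Fin d,
      (if ∀ k k' : Fin m, a k = a k' then (d : ℂ)⁻¹ else 0) := by
    simp [Matrix.trace, Matrix.diag, ghz, and_self]
  rw [this]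
  rw [Finset.sum_congr rfl fun a _ => hpt a, Finset.sum_comm]
  simp only [Finset.sum_ite_eq', Finset.mem_univ, if_true]
  rw [Finset.sum_const, Finset.card_univ, Fintype.card_fin, nsmul_eq_mul]
  exact mul_inv_cancel₀ (by exact_mod_cast hd.ne')

lemma card_T {m d : ℕ} : Fintype.card ((_ : Fin m) → Fin d) = d ^ m := by
  simp

section SQ
variable {m d : ℕ}

lemma S_mul_S (hm : 0 < m) :
    (∑ j : Fin d, diagProj m d (j : ℕ)) * (∑ j : Fin d, diagProj m d (j : ℕ))
      = ∑ j : Fin d, diagProj m d (j : ℕ) := by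
  rw [Finset.sum_mul]
  refine Finset.sum_congr rfl fun j _ => ?_
  rw [Finset.mul_sum, Finset.sum_eq_single j]
  · exact diagProj_mul_self j
  · intro j' _ hj'
    exact diagProj_mul_ne hm hj'.symm
  · intro h; exact absurd (Finset.mem_univ _) h

lemma S_herm : (∑ j : Fin d, diagProj m d (j : ℕ)).IsHermitian := by
  show _ = _
  rw [Matrix.conjTranspose_sum]
  exact Finset.sum_congr rfl fun j _ => (diagProj_psd j).1

lemma S_trace : (∑ j : Fin d, diagProj m d (j : ℕ)).trace = (d : ℂ) := by
  rw [Matrix.trace_sum]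
  simp [diagProj_trace]

lemma Q_mul_Q (hm : 0 < m) :
    ((1 : Matrix ((_ : Fin m) → Fin d) ((_ : Fin m) → Fin d) ℂ)
        - ∑ j : Fin d, diagProj m d (j : ℕ)) *
      ((1 : Matrix ((_ : Fin m) → Fin d) ((_ : Fin m) → Fin d) ℂ)
        - ∑ j : Fin d, diagProj m d (j : ℕ))
      = (1 : Matrix ((_ : Fin m) → Fin d) ((_ : Fin m) → Fin d) ℂ)
        - ∑ j : Fin d, diagProj m d (j : ℕ) := by
  rw [mul_sub, mul_one, sub_mul, one_mul, S_mul_S hm]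
  abel

lemma Q_herm : ((1 : Matrix ((_ : Fin m) → Fin d) ((_ : Fin m) → Fin d) ℂ)
    - ∑ j : Fin d, diagProj m d (j : ℕ)).IsHermitian :=
  Matrix.isHermitian_one.sub S_herm

lemma Q_trace : ((1 : Matrix ((_ : Fin m) → Fin d) ((_ : Fin m) → Fin d) ℂ)
    - ∑ j : Fin d, diagProj m d (j : ℕ)).trace = (d : ℂ) ^ m - d := by
  rw [Matrix.trace_sub, Matrix.trace_one, S_trace, card_T]
  push_cast
  ring

end SQ

lemma sum_split {β : Type*} [AddCommMonoid β] {d : ℕ} (f : Fin (d + 2) → β) :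
    ∑ i, f i = (∑ j : Fin d, f ⟨(j : ℕ), by omega⟩) + f ⟨d, by omega⟩ + f ⟨d + 1, by omega⟩ := by
  rw [Fin.sum_univ_castSucc, Fin.sum_univ_castSucc]
  rfl


/-- for the m-qudit ensemble of Example 2 and its LOCC measurement M,
the ensemble is well formed, M is a POVM, its success probability is d^m/(d^m+d),
max_i η_i = (d^m−d)/(d^m+d) < d^m/(d^m+d), and Tr[M_i(1 − R_i)] = 0 for all i,
where R_i = (d^m+d)η_iρ_i. -/
theorem example_two_locc_measurement (m d : ℕ) (hm : 2 ≤ m) (hd : 2 ≤ d)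
    (η : Fin (d + 2) → ℝ)
    (ρ M : Fin (d + 2) → Matrix ((_ : Fin m) → Fin d) ((_ : Fin m) → Fin d) ℂ)
    (hη : ∀ i, η i =
      if (i : ℕ) < d then ((d : ℝ) ^ m + d)⁻¹
      else if (i : ℕ) = d then ((d : ℝ) ^ m - d) / ((d : ℝ) ^ m + d)
      else (d : ℝ) / ((d : ℝ) ^ m + d))
    (hρ : ∀ i, ρ i =
      if (i : ℕ) < d then diagProj m d i
      else if (i : ℕ) = d then
        ((d : ℂ) ^ m - d)⁻¹ • (1 - ∑ j : Fin d, diagProj m d j)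
      else ghz m d)
    (hM : ∀ i, M i =
      if (i : ℕ) < d then diagProj m d i
      else if (i : ℕ) = d then 1 - ∑ j : Fin d, diagProj m d j
      else 0) :
    (∀ i, 0 < η i) ∧ (∑ i, η i = 1) ∧
    (∀ i, (ρ i).PosSemidef ∧ (ρ i).trace = 1) ∧
    IsPOVM M ∧
    succProb η ρ M = (d : ℝ) ^ m / ((d : ℝ) ^ m + d) ∧
    (∀ i, η i ≤ ((d : ℝ) ^ m - d) / ((d : ℝ) ^ m + d)) ∧
    ((d : ℝ) ^ m - d) / ((d : ℝ) ^ m + d) < (d : ℝ) ^ m / ((d : ℝ) ^ m + d) ∧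
    (∀ i, ((M i) * (1 - (((d : ℝ) ^ m + d) • (η i • ρ i)))).trace = 0) := by
  
  have hm0 : 0 < m := by omega
  have hd0 : 0 < d := by omega
  have hdd : d + d ≤ d ^ m := by
    have h2 : d * d ≤ d ^ m := by
      calc d * d = d ^ 2 := (sq d).symm
        _ ≤ d ^ m := Nat.pow_le_pow_right (by omega) hm
    nlinarith
  have hd1 : d + 1 ≤ d ^ m := by omega
  have hPow : ((d : ℝ)) ^ m = ((d ^ m : ℕ) : ℝ) := by push_cast; ring
  have hdmR : (d : ℝ) + d ≤ (d : ℝ) ^ m := by rw [hPow]; exact_mod_cast hdd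
  have hd1R : (d : ℝ) + 1 ≤ (d : ℝ) ^ m := by rw [hPow]; exact_mod_cast hd1
  have hDpos : (0 : ℝ) < d := by exact_mod_cast hd0
  have hden : (0 : ℝ) < (d : ℝ) ^ m + d := by nlinarith
  have hnum : (0 : ℝ) < (d : ℝ) ^ m - d := by nlinarith
  have hcast : ((((d : ℝ) ^ m - d) : ℝ) : ℂ) = (d : ℂ) ^ m - d := by push_cast; ring
  have hdenC : ((d : ℂ) ^ m - (d : ℂ)) ≠ 0 := by
    rw [← hcast]
    exact_mod_cast hnum.ne'
  have hcinv : ((d : ℂ) ^ m - (d : ℂ))⁻¹ = ((((d : ℝ) ^ m - d)⁻¹ : ℝ) : ℂ) := by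
    rw [Complex.ofReal_inv, hcast]
  have hQpsd : ((1 : Matrix ((_ : Fin m) → Fin d) ((_ : Fin m) → Fin d) ℂ)
      - ∑ j : Fin d, diagProj m d (j : ℕ)).PosSemidef := idem_psd Q_herm (Q_mul_Q hm0)
  -- evaluations of η, ρ, M at the three kinds of indices
  have e1 : ∀ j : Fin d, η ⟨(j : ℕ), by omega⟩ = ((d : ℝ) ^ m + d)⁻¹ := fun j => by
    rw [hη]; exact if_pos j.isLt
  have e2 : η ⟨d, by omega⟩ = ((d : ℝ) ^ m - d) / ((d : ℝ) ^ m + d) := by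
    rw [hη]; simp
  have e3 : η ⟨d + 1, by omega⟩ = (d : ℝ) / ((d : ℝ) ^ m + d) := by
    rw [hη]; norm_num
  have r1 : ∀ j : Fin d, ρ ⟨(j : ℕ), by omega⟩ = diagProj m d (j : ℕ) := fun j => by
    rw [hρ]; exact if_pos j.isLt
  have r2 : ρ ⟨d, by omega⟩ = ((d : ℂ) ^ m - d)⁻¹ •
      ((1 : Matrix ((_ : Fin m) → Fin d) ((_ : Fin m) → Fin d) ℂ)
        - ∑ j : Fin d, diagProj m d (j : ℕ)) := by
    rw [hρ]; simp
  have r3 : ρ ⟨d + 1, by omega⟩ = ghz m d := by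
    rw [hρ]; norm_num
  have f1 : ∀ j : Fin d, M ⟨(j : ℕ), by omega⟩ = diagProj m d (j : ℕ) := fun j => by
    rw [hM]; exact if_pos j.isLt
  have f2 : M ⟨d, by omega⟩ = (1 : Matrix ((_ : Fin m) → Fin d) ((_ : Fin m) → Fin d) ℂ)
      - ∑ j : Fin d, diagProj m d (j : ℕ) := by
    rw [hM]; simp
  have f3 : M ⟨d + 1, by omega⟩ = 0 := by
    rw [hM]; norm_num
  refine ⟨?_, ?_, ?_, ?_, ?_, ?_, ?_, ?_⟩
  · -- 0 < η i
    intro i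
    rw [hη i]
    split_ifs with h1 h2
    · exact inv_pos.mpr hden
    · exact div_pos hnum hden
    · exact div_pos hDpos hden
  · -- ∑ η = 1
    rw [sum_split η, Finset.sum_congr rfl (fun j _ => e1 j), e2, e3, Finset.sum_const,
      Finset.card_univ, Fintype.card_fin, nsmul_eq_mul]
    field_simp
    ring
  · -- ρ i density operators
    intro i
    rw [hρ i]
    rcases (show (i : ℕ) < d ∨ (i : ℕ) = d ∨ (i : ℕ) = d + 1 by omega) with hi | hi | hi
    · rw [if_pos hi]
      exact ⟨diagProj_psd ⟨(i : ℕ), hi⟩, diagProj_trace ⟨(i : ℕ), hi⟩⟩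
    · rw [if_neg (by omega), if_pos hi]
      constructor
      · rw [hcinv]
        exact psd_smul_real hQpsd (inv_nonneg.mpr hnum.le)
      · rw [Matrix.trace_smul, Q_trace, smul_eq_mul, inv_mul_cancel₀ hdenC]
    · rw [if_neg (by omega), if_neg (by omega)]
      exact ⟨ghz_psd hd0, ghz_trace hm0 hd0⟩
  · -- POVM
    constructor
    · intro i
      rw [hM i]
      rcases (show (i : ℕ) < d ∨ (i : ℕ) = d ∨ (i : ℕ) = d + 1 by omega) with hi | hi | hi
      · rw [if_pos hi]
        exact diagProj_psd ⟨(i : ℕ), hi⟩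
      · rw [if_neg (by omega), if_pos hi]
        exact hQpsd
      · rw [if_neg (by omega), if_neg (by omega)]
        exact Matrix.PosSemidef.zero
    · rw [sum_split M, Finset.sum_congr rfl (fun j _ => f1 j), f2, f3, add_zero]
      abel
  · -- success probability
    show (∑ i, η i * ((ρ i * M i).trace).re) = (d : ℝ) ^ m / ((d : ℝ) ^ m + d)
    rw [sum_split (fun i => η i * ((ρ i * M i).trace).re)]
    have t1 : ∀ j : Fin d, η ⟨(j : ℕ), by omega⟩ *
        (((ρ ⟨(j : ℕ), by omega⟩ * M ⟨(j : ℕ), by omega⟩).trace).re)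
          = ((d : ℝ) ^ m + d)⁻¹ := by
      intro j
      rw [e1 j, r1 j, f1 j, diagProj_mul_self j, diagProj_trace j, Complex.one_re, mul_one]
    have t2 : η ⟨d, by omega⟩ * (((ρ ⟨d, by omega⟩ * M ⟨d, by omega⟩).trace).re)
        = ((d : ℝ) ^ m - d) / ((d : ℝ) ^ m + d) := by
      rw [e2, r2, f2, Matrix.smul_mul, Q_mul_Q hm0, Matrix.trace_smul, Q_trace,
        smul_eq_mul, inv_mul_cancel₀ hdenC, Complex.one_re, mul_one]
    have t3 : η ⟨d + 1, by omega⟩ * (((ρ ⟨d + 1, by omega⟩ * M ⟨d + 1, by omega⟩).trace).re)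
        = 0 := by
      rw [f3, mul_zero, Matrix.trace_zero, Complex.zero_re, mul_zero]
    rw [Finset.sum_congr rfl (fun j _ => t1 j), t2, t3, add_zero, Finset.sum_const,
      Finset.card_univ, Fintype.card_fin, nsmul_eq_mul]
    field_simp
    ring
  · -- η i ≤ (d^m - d)/(d^m + d)
    intro i
    rw [hη i]
    rcases (show (i : ℕ) < d ∨ (i : ℕ) = d ∨ (i : ℕ) = d + 1 by omega) with hi | hi | hi
    · rw [if_pos hi, inv_eq_one_div, div_le_div_iff₀ hden hden]
      nlinarith
    · rw [if_neg (by omega), if_pos hi]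
    · rw [if_neg (by omega), if_neg (by omega), div_le_div_iff₀ hden hden]
      nlinarith
  · -- strict inequality
    rw [div_lt_div_iff₀ hden hden]
    nlinarith
  · -- Tr[M_i (1 - R_i)] = 0
    intro i
    rw [hM i, hρ i, hη i]
    rcases (show (i : ℕ) < d ∨ (i : ℕ) = d ∨ (i : ℕ) = d + 1 by omega) with hi | hi | hi
    · simp only [if_pos hi]
      rw [smul_smul, mul_inv_cancel₀ hden.ne', one_smul, mul_sub, mul_one,
        diagProj_mul_self ⟨(i : ℕ), hi⟩, sub_self, Matrix.trace_zero]
    · simp only [if_neg (show ¬ (i : ℕ) < d by omega), if_pos hi]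
      rw [smul_smul,
        show ((d : ℝ) ^ m + d) * (((d : ℝ) ^ m - d) / ((d : ℝ) ^ m + d)) = (d : ℝ) ^ m - d from
          by field_simp,
        rsmul_eq, smul_smul, hcast, mul_inv_cancel₀ hdenC, one_smul, mul_sub, mul_one,
        Q_mul_Q hm0, sub_self, Matrix.trace_zero]
    · simp only [if_neg (show ¬ (i : ℕ) < d by omega),
        if_neg (show ¬ (i : ℕ) = d by omega)]
      rw [zero_mul, Matrix.trace_zero]
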